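/- Let n ∈ ℕ, let f_n(t) = t^n·e^{−t}·1_{(0,∞)}(t), and let A_n be the polynomial A_n(z) = Σ_{k=0}^n C(n,k)·(n+k)!·z^{n−k} (where C(n,k) is the binomial coefficient). Then for all (x,ξ) ∈ ℝ², A(f_n,f_n)(x,ξ) = e^{−|x|(1+iπξ)} · (2 + 2πiξ)^{−(2n+1)} · A_n(|x|·(2 + 2πiξ)). -/

import Mathlib

open MeasureTheory Complex Set Filter

/-- The cross-ambiguity function of `f, g : ℝ → ℂ`. -/
noncomputable def ambiguity (f g : ℝ → ℂ) (x ξ : ℝ) : ℂ :=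
  ∫ t : ℝ, f (t + x / 2) * (starRingEnd ℂ) (g (t - x / 2)) *
    Complex.exp (-2 * Real.pi * Complex.I * ξ * t)

/-- `f_n(t) = t^n e^{-t} 1_{(0,∞)}(t)`. -/
noncomputable def fn (n : ℕ) : ℝ → ℂ :=
  fun t => if 0 < t then (t : ℂ) ^ n * Complex.exp (-(t : ℂ)) else 0

/-- The polynomial `A_n(z) = ∑_{k=0}^n C(n,k) (n+k)! z^{n-k}`. -/
noncomputable def Apoly (n : ℕ) (z : ℂ) : ℂ :=
  ∑ k ∈ Finset.range (n + 1),
    (n.choose k : ℂ) * (Nat.factorial (n + k) : ℂ) * z ^ (n - k)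


lemma integ_aux (c : ℂ) (hc : 0 < c.re) (m : ℕ) :
    IntegrableOn (fun t : ℝ => (t : ℂ) ^ m * Complex.exp (-(c * t))) (Set.Ioi 0) := by
  have hg : IntegrableOn (fun t : ℝ => t ^ m * Real.exp (-c.re * t)) (Set.Ioi 0) := by
    have h := integrableOn_rpow_mul_exp_neg_mul_rpow (p := 1) (s := (m : ℝ)) (b := c.re)
      (lt_of_lt_of_le neg_one_lt_zero (Nat.cast_nonneg m)) one_pos hc
    refine h.congr_fun (fun t ht => ?_) measurableSet_Ioi
    simp only [Real.rpow_natCast, Real.rpow_one]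
  refine hg.mono' ?_ ?_
  · exact (Continuous.aestronglyMeasurable (by fun_prop))
  · filter_upwards [ae_restrict_mem measurableSet_Ioi] with t ht
    rw [norm_mul, norm_pow, Complex.norm_exp]
    simp only [Complex.norm_real, Real.norm_eq_abs, abs_of_pos (Set.mem_Ioi.mp ht),
      Complex.neg_re, Complex.mul_re, Complex.ofReal_re, Complex.ofReal_im, mul_zero, sub_zero]
    rw [neg_mul]

lemma exp_deriv_aux (c : ℂ) (t : ℝ) :
    HasDerivAt (fun s : ℝ => Complex.exp (-(c * s))) (-c * Complex.exp (-(c * t))) t := by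
  have h : HasDerivAt (fun z : ℂ => Complex.exp (-(c * z))) (-c * Complex.exp (-(c * t))) (t : ℂ) := by
    simpa [mul_comm] using (((hasDerivAt_id ((t : ℝ) : ℂ)).const_mul c).neg).cexp
  exact h.comp_ofReal

lemma tendsto_aux (c : ℂ) (hc : 0 < c.re) (m : ℕ) :
    Tendsto (fun t : ℝ => (t : ℂ) ^ m * Complex.exp (-(c * t))) atTop (nhds 0) := by
  rw [tendsto_zero_iff_norm_tendsto_zero]
  have h := tendsto_rpow_mul_exp_neg_mul_atTop_nhds_zero (m : ℝ) c.re hc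
  apply h.congr'
  filter_upwards [eventually_gt_atTop (0:ℝ)] with t ht
  rw [norm_mul, norm_pow, Complex.norm_exp]
  simp only [Complex.norm_real, Real.norm_eq_abs, abs_of_pos ht, Complex.neg_re,
    Complex.mul_re, Complex.ofReal_re, Complex.ofReal_im, mul_zero, sub_zero]
  rw [Real.rpow_natCast, neg_mul]

lemma laplace (c : ℂ) (hc : 0 < c.re) (m : ℕ) :
    ∫ t in Set.Ioi (0:ℝ), (t : ℂ) ^ m * Complex.exp (-(c * t))
      = (Nat.factorial m : ℂ) / c ^ (m + 1) := by
  have hc0 : c ≠ 0 := fun h => by simp [h] at hc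
  induction m with
  | zero =>
      have key := integral_Ioi_of_hasDerivAt_of_tendsto' (a := (0:ℝ))
        (f := fun t : ℝ => -c⁻¹ * Complex.exp (-(c * t)))
        (f' := fun t : ℝ => Complex.exp (-(c * t)))
        (fun t _ => by
          have := ((exp_deriv_aux c t).const_mul (-c⁻¹))
          convert this using 1
          · rfl
          rw [← mul_assoc, neg_mul_neg, inv_mul_cancel₀ hc0, one_mul])
        (by simpa using integ_aux c hc 0)
        (by
          have := ((tendsto_aux c hc 0).const_mul (-c⁻¹))
          simpa using this)
      simp only [Complex.ofReal_zero, mul_zero, neg_zero, Complex.exp_zero, mul_one] at key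
      simp only [pow_zero, one_mul] at key ⊢
      rw [key]
      simp [Nat.factorial]
  | succ m ih =>
      have hderiv : ∀ t : ℝ, HasDerivAt
          (fun t : ℝ => -c⁻¹ * ((t : ℂ) ^ (m+1) * Complex.exp (-(c * t))))
          (-c⁻¹ * ((m+1 : ℂ) * (t:ℂ)^m * Complex.exp (-(c*t))) + (t:ℂ)^(m+1) * Complex.exp (-(c*t))) t := by
        intro t
        have h1 : HasDerivAt (fun s : ℝ => ((s:ℂ)) ^ (m+1)) ((m+1 : ℂ) * (t:ℂ)^m) t := by
          have := (hasDerivAt_pow (m+1) ((t:ℝ):ℂ)).comp_ofReal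
          simpa using this
        have h2 := (h1.mul (exp_deriv_aux c t)).const_mul (-c⁻¹)
        convert h2 using 1
        · rfl
        · rfl
        linear_combination (-(t:ℂ)^(m+1) * Complex.exp (-(c*t))) * inv_mul_cancel₀ hc0
      have hint1 := integ_aux c hc m
      have hint2 := integ_aux c hc (m+1)
      have key := integral_Ioi_of_hasDerivAt_of_tendsto' (a := (0:ℝ))
        (f' := fun t : ℝ => -c⁻¹ * ((m+1 : ℂ) * (t:ℂ)^m * Complex.exp (-(c*t))) + (t:ℂ)^(m+1) * Complex.exp (-(c*t)))
        (fun t _ => hderiv t)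
        (by
          apply Integrable.add
          · exact (MeasureTheory.IntegrableOn.congr_fun (hint1.const_mul (-c⁻¹ * ((m:ℂ)+1))) (fun t _ => by ring) measurableSet_Ioi)
          · exact hint2)
        (by
          have := ((tendsto_aux c hc (m+1)).const_mul (-c⁻¹))
          simpa using this)
      rw [integral_add ((MeasureTheory.IntegrableOn.congr_fun (hint1.const_mul (-c⁻¹ * ((m:ℂ)+1))) (fun t _ => by ring) measurableSet_Ioi)) hint2] at key
      have e1 : ∫ t in Set.Ioi (0:ℝ), -c⁻¹ * ((m+1 : ℂ) * (t:ℂ)^m * Complex.exp (-(c*t)))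
          = -c⁻¹ * (m+1) * ((m.factorial : ℂ) / c ^ (m+1)) := by
        rw [show (fun t:ℝ => -c⁻¹ * ((m+1 : ℂ) * (t:ℂ)^m * Complex.exp (-(c*t))))
            = fun t:ℝ => (-c⁻¹ * (m+1)) * ((t:ℂ)^m * Complex.exp (-(c*t))) from funext fun t => by ring,
          integral_const_mul, ih]
      rw [e1] at key
      simp only [Complex.ofReal_zero, mul_zero, neg_zero, Complex.exp_zero, mul_one,
        zero_pow (Nat.succ_ne_zero m), mul_zero, zero_mul, sub_zero] at key
      have : (∫ t in Set.Ioi (0:ℝ), (t:ℂ)^(m+1) * Complex.exp (-(c*t)))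
          = c⁻¹ * (m+1) * ((m.factorial : ℂ) / c ^ (m+1)) := by
        have := key
        linear_combination this
      rw [this, Nat.factorial_succ]
      push_cast
      rw [pow_succ]
      field_simp
      ring

lemma shift_Ioi (G : ℝ → ℂ) (a : ℝ) :
    ∫ t in Set.Ioi a, G t = ∫ s in Set.Ioi (0:ℝ), G (s + a) := by
  rw [← integral_indicator measurableSet_Ioi, ← integral_indicator measurableSet_Ioi,
    ← integral_add_right_eq_self (Set.indicator (Set.Ioi a) G) a]
  congr 1
  ext s
  simp [Set.indicator_apply, Set.mem_Ioi, lt_add_iff_pos_left]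

theorem ambiguity_fn_eq (n : ℕ) (x ξ : ℝ) :
    ambiguity (fn n) (fn n) x ξ =
      Complex.exp (-((|x| : ℝ) : ℂ) * (1 + Real.pi * Complex.I * ξ)) *
        (1 / (2 + 2 * Real.pi * Complex.I * ξ) ^ (2 * n + 1)) *
        Apoly n (((|x| : ℝ) : ℂ) * (2 + 2 * Real.pi * Complex.I * ξ)) := by
  set c : ℂ := 2 + 2 * Real.pi * Complex.I * ξ with hc_def
  have hc : 0 < c.re := by
    simp [hc_def, Complex.add_re, Complex.mul_re]
  have hc0 : c ≠ 0 := fun h => by simp [h] at hc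
  set X : ℂ := ((|x| : ℝ) : ℂ) with hX_def
  set E : ℂ := Complex.exp (-X * (1 + Real.pi * Complex.I * ξ)) with hE_def
  set G : ℝ → ℂ := fun t =>
    ((t + x / 2 : ℝ) : ℂ) ^ n * Complex.exp (-((t + x / 2 : ℝ) : ℂ)) *
    (((t - x / 2 : ℝ) : ℂ) ^ n * Complex.exp (-((t - x / 2 : ℝ) : ℂ))) *
    Complex.exp (-2 * Real.pi * Complex.I * ξ * t) with hG_def
  -- Step A: integrand is indicator
  have stepA : ambiguity (fn n) (fn n) x ξ = ∫ t in Set.Ioi (|x| / 2), G t := by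
    rw [ambiguity, ← integral_indicator measurableSet_Ioi]
    congr 1
    ext t
    by_cases h : |x| / 2 < t
    · have hx1 : 0 < t + x / 2 := by
        rcases abs_cases x with ⟨h1, _⟩ | ⟨h1, _⟩ <;> rw [h1] at h <;> linarith
      have hx2 : 0 < t - x / 2 := by
        rcases abs_cases x with ⟨h1, _⟩ | ⟨h1, _⟩ <;> rw [h1] at h <;> linarith
      rw [Set.indicator_of_mem (Set.mem_Ioi.mpr h)]
      simp only [fn, if_pos hx1, if_pos hx2, hG_def]
      rw [map_mul, map_pow, Complex.conj_ofReal, ← Complex.exp_conj, map_neg, Complex.conj_ofReal]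
    · rw [Set.indicator_of_notMem (by simpa using h)]
      have : ¬ 0 < t + x / 2 ∨ ¬ 0 < t - x / 2 := by
        rcases abs_cases x with ⟨h1, _⟩ | ⟨h1, _⟩ <;> rw [h1] at h <;>
          [right; left] <;> intro hh <;> apply h <;> linarith
      rcases this with h' | h'
      · have h0 : fn n (t + x / 2) = 0 := by simp only [fn]; rw [if_neg h']
        rw [h0, zero_mul, zero_mul]
      · have h0 : fn n (t - x / 2) = 0 := by simp only [fn]; rw [if_neg h']
        rw [h0, map_zero, mul_zero, zero_mul]
  -- Step B+C
  have stepC : ∀ s : ℝ, G (s + |x| / 2)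
      = E * (((s * (s + |x|) : ℝ) : ℂ) ^ n * Complex.exp (-(c * s))) := by
    intro s
    have hprod : ((s + |x| / 2 + x / 2) * (s + |x| / 2 - x / 2) : ℝ) = s * (s + |x|) := by
      nlinarith [_root_.sq_abs x]
    simp only [hG_def]
    rw [mul_comm (((s + |x| / 2 + x / 2 : ℝ) : ℂ) ^ n) _]
    calc Complex.exp (-((s + |x|/2 + x/2 : ℝ) : ℂ)) *
          ((((s + |x|/2 + x/2 : ℝ) : ℂ)) ^ n) *
          ((((s + |x|/2 - x/2 : ℝ) : ℂ)) ^ n * Complex.exp (-((s + |x|/2 - x/2 : ℝ) : ℂ))) *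
          Complex.exp (-2 * Real.pi * Complex.I * ξ * ((s + |x|/2 : ℝ) : ℂ))
        = (((s + |x|/2 + x/2 : ℝ) : ℂ) * ((s + |x|/2 - x/2 : ℝ) : ℂ)) ^ n *
          (Complex.exp (-((s + |x|/2 + x/2 : ℝ) : ℂ)) * Complex.exp (-((s + |x|/2 - x/2 : ℝ) : ℂ)) *
           Complex.exp (-2 * Real.pi * Complex.I * ξ * ((s + |x|/2 : ℝ) : ℂ))) := by
          rw [mul_pow]; ring
      _ = (((s * (s + |x|) : ℝ)) : ℂ) ^ n *
          Complex.exp (-X * (1 + Real.pi * Complex.I * ξ) + -(c * s)) := by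
          rw [← Complex.exp_add, ← Complex.exp_add, ← ofReal_mul, hprod]
          congr 2
          push_cast [hc_def, hX_def]
          ring
      _ = E * ((((s * (s + |x|) : ℝ)) : ℂ) ^ n * Complex.exp (-(c * s))) := by
          rw [Complex.exp_add, hE_def]; ring
  rw [stepA, shift_Ioi G (|x| / 2)]
  simp_rw [stepC]
  rw [integral_const_mul]
  have hsum : ∫ s in Set.Ioi (0:ℝ), (((s * (s + |x|) : ℝ)) : ℂ) ^ n * Complex.exp (-(c * s))
      = ∑ k ∈ Finset.range (n + 1),
          ((n.choose k : ℂ) * X ^ (n - k)) * ((Nat.factorial (n + k) : ℂ) / c ^ (n + k + 1)) := by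
    have expand : ∀ s : ℝ, (((s * (s + |x|) : ℝ)) : ℂ) ^ n * Complex.exp (-(c * s))
        = ∑ k ∈ Finset.range (n + 1),
            ((n.choose k : ℂ) * X ^ (n - k)) * ((s : ℂ) ^ (n + k) * Complex.exp (-(c * s))) := by
      intro s
      push_cast
      rw [mul_pow, add_pow, Finset.mul_sum, Finset.sum_mul]
      refine Finset.sum_congr rfl fun k hk => ?_
      rw [pow_add]
      simp only [hX_def]
      push_cast
      ring
    calc ∫ s in Set.Ioi (0:ℝ), (((s * (s + |x|) : ℝ)) : ℂ) ^ n * Complex.exp (-(c * s))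
        = ∫ s in Set.Ioi (0:ℝ), ∑ k ∈ Finset.range (n + 1),
            ((n.choose k : ℂ) * X ^ (n - k)) * ((s : ℂ) ^ (n + k) * Complex.exp (-(c * s))) :=
          setIntegral_congr_fun measurableSet_Ioi fun s _ => expand s
      _ = ∑ k ∈ Finset.range (n + 1), ∫ s in Set.Ioi (0:ℝ),
            ((n.choose k : ℂ) * X ^ (n - k)) * ((s : ℂ) ^ (n + k) * Complex.exp (-(c * s))) :=
          integral_finset_sum _ fun k _ => (integ_aux c hc (n + k)).const_mul _
      _ = ∑ k ∈ Finset.range (n + 1),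
            ((n.choose k : ℂ) * X ^ (n - k)) * ((Nat.factorial (n + k) : ℂ) / c ^ (n + k + 1)) := by
          refine Finset.sum_congr rfl fun k _ => ?_
          rw [integral_const_mul, laplace c hc (n + k)]
  rw [hsum]
  have hApoly : (1 / c ^ (2 * n + 1)) * Apoly n (X * c)
      = ∑ k ∈ Finset.range (n + 1),
          ((n.choose k : ℂ) * X ^ (n - k)) * ((Nat.factorial (n + k) : ℂ) / c ^ (n + k + 1)) := by
    rw [Apoly, Finset.mul_sum]
    refine Finset.sum_congr rfl fun k hk => ?_
    have hk' : k ≤ n := Nat.lt_succ_iff.mp (Finset.mem_range.mp hk)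
    have hpow : c ^ (2 * n + 1) = c ^ (n + k + 1) * c ^ (n - k) := by
      rw [← pow_add]; congr 1; omega
    rw [mul_pow, hpow]
    field_simp
  rw [mul_assoc, ← hApoly]
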